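/- Let n ≥ 1, θ : Fin n → ℝ, and p : Fin n × Fin n → [0,1]. Consider the Bernoulli-Plackett-Luce model, which samples a permutation π of {1,…,n} from the Plackett-Luce distribution with logits θ and, independently, mutually independent Bernoulli variables b_{ij} with parameters p_{ij}. The joint score of a sample M' = (π, b) is the vector G(M') whose Plackett-Luce block has (reordered) entries G_i(π) = 1 − Σ_{k=1}^{i} exp(θ_{π_i}) / (Σ_{u=k}^n exp(θ_{π_u})) and whose Bernoulli block has entries b_{ij} − p_{ij}. Let f be any real-valued function of (π, b), let m ∈ ℝ, and suppose (f(M') − m)² ≤ V for every (π, b). Then the REINFORCE estimator g(M') = (f(M') − m)·G(M') satisfies Var(g) ≤ E[‖g(M')‖₂²] ≤ V · ( n + Σ_{i,j} p_{ij}(1 − p_{ij}) ), where Var(g) denotes the trace of the covariance matrix of g, i.e., Var(g) = E[‖g‖₂²] − ‖E[g]‖₂². -/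

import Mathlib

open Finset

/-- The Plackett-Luce probability of a permutation `π` of `{1,…,n}` with logits `θ`. -/
noncomputable def plackettLuce {n : ℕ} (θ : Fin n → ℝ) (π : Equiv.Perm (Fin n)) : ℝ :=
  ∏ k : Fin n,
    Real.exp (θ (π k)) / ∑ u ∈ Finset.univ.filter (fun u => k ≤ u), Real.exp (θ (π u))

/-- Joint probability of a `(permutation, edge mask)` sample under the
Bernoulli-Plackett-Luce model. -/
noncomputable def bplProb {n : ℕ} (θ : Fin n → ℝ) (p : Fin n → Fin n → ℝ)
    (ω : Equiv.Perm (Fin n) × (Fin n → Fin n → Bool)) : ℝ :=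
  plackettLuce θ ω.1 * ∏ i : Fin n, ∏ j : Fin n, (if ω.2 i j then p i j else 1 - p i j)

/-- The Plackett-Luce score component at rank position `i`:
`G_i(π) = 1 − Σ_{k=1}^{i} exp(θ_{π_i}) / (Σ_{u=k}^n exp(θ_{π_u}))`. -/
noncomputable def plScore {n : ℕ} (θ : Fin n → ℝ) (π : Equiv.Perm (Fin n)) (i : Fin n) : ℝ :=
  1 - ∑ k ∈ Finset.univ.filter (fun k => k ≤ i),
        Real.exp (θ (π i)) / ∑ u ∈ Finset.univ.filter (fun u => k ≤ u), Real.exp (θ (π u))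

/-- The joint score vector of a Bernoulli-Plackett-Luce sample `M' = (π, b)`:
its Plackett-Luce block has entries `G_i(π)` and its Bernoulli block has
entries `b_{ij} − p_{ij}`. -/
noncomputable def bplScore {n : ℕ} (θ : Fin n → ℝ) (p : Fin n → Fin n → ℝ)
    (ω : Equiv.Perm (Fin n) × (Fin n → Fin n → Bool)) :
    Fin n ⊕ Fin n × Fin n → ℝ :=
  Sum.elim (fun i => plScore θ ω.1 i)
    (fun ij => (if ω.2 ij.1 ij.2 then (1 : ℝ) else 0) - p ij.1 ij.2)

section Aux
variable {n : ℕ} (θ : Fin (n+1) → ℝ) (p : Fin (n+1)) (e : Equiv.Perm (Fin n))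

/-- the item embedding for the tail -/
def psi (p : Fin (n+1)) (i : Fin n) : Fin (n+1) := Equiv.swap 0 p i.succ

lemma cover_lemma (h : Fin (n+1) → ℝ) : h p + ∑ j : Fin n, h (psi p j) = ∑ t, h t := by
  have := Equiv.sum_comp (Equiv.swap 0 p) h
  rw [← this, Fin.sum_univ_succ]
  simp [psi]

/-- denominator at position 0 is the full sum -/
lemma denom_zero (π : Equiv.Perm (Fin (n+1))) :
    ∑ u ∈ Finset.univ.filter (fun u => (0:Fin (n+1)) ≤ u), Real.exp (θ (π u))
      = ∑ t, Real.exp (θ t) := by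
  rw [Finset.filter_true_of_mem (fun x _ => Fin.zero_le x)]
  exact Equiv.sum_comp π fun t => Real.exp (θ t)

lemma denom_succ (k : Fin n) :
    ∑ u ∈ Finset.univ.filter (fun u => k.succ ≤ u),
        Real.exp (θ (Equiv.Perm.decomposeFin.symm (p, e) u))
      = ∑ u ∈ Finset.univ.filter (fun u => k ≤ u), Real.exp (θ (psi p (e u))) := by
  rw [Finset.sum_filter, Finset.sum_filter, Fin.sum_univ_succ]
  have h0 : ¬ (k.succ ≤ (0 : Fin (n+1))) := by
    simp [Fin.le_zero_iff, Fin.succ_ne_zero]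
  rw [if_neg h0, zero_add]
  refine Finset.sum_congr rfl fun i _ => ?_
  simp only [Fin.succ_le_succ_iff, Equiv.Perm.decomposeFin_symm_apply_succ]
  rfl

lemma pl_decomp :
    plackettLuce θ (Equiv.Perm.decomposeFin.symm (p, e))
      = (Real.exp (θ p) / ∑ t, Real.exp (θ t)) * plackettLuce (fun i => θ (psi p i)) e := by
  rw [plackettLuce, Fin.prod_univ_succ, plackettLuce]
  congr 1
  · rw [Equiv.Perm.decomposeFin_symm_apply_zero, denom_zero]
  · refine Finset.prod_congr rfl fun k _ => ?_
    rw [denom_succ, Equiv.Perm.decomposeFin_symm_apply_succ]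
    rfl

lemma plScore_zero :
    plScore θ (Equiv.Perm.decomposeFin.symm (p, e)) 0
      = 1 - Real.exp (θ p) / ∑ t, Real.exp (θ t) := by
  rw [plScore]
  congr 1
  have : Finset.univ.filter (fun k => k ≤ (0:Fin (n+1))) = {0} := by
    ext k; simp [Fin.le_zero_iff]
  rw [this, Finset.sum_singleton, Equiv.Perm.decomposeFin_symm_apply_zero, denom_zero]

lemma plScore_succ (i : Fin n) :
    plScore θ (Equiv.Perm.decomposeFin.symm (p, e)) i.succ
      = plScore (fun j => θ (psi p j)) e i
        - Real.exp (θ (psi p (e i))) / ∑ t, Real.exp (θ t) := by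
  rw [plScore, plScore]
  have hπ : Equiv.Perm.decomposeFin.symm (p, e) i.succ = psi p (e i) := by
    rw [Equiv.Perm.decomposeFin_symm_apply_succ]; rfl
  rw [Finset.sum_filter, Fin.sum_univ_succ]
  have h0 : (0:Fin (n+1)) ≤ i.succ := Fin.zero_le _
  rw [if_pos h0, hπ, denom_zero]
  have : ∀ k : Fin n, (if k.succ ≤ i.succ then
      Real.exp (θ (psi p (e i))) / ∑ u ∈ Finset.univ.filter (fun u => k.succ ≤ u),
        Real.exp (θ (Equiv.Perm.decomposeFin.symm (p, e) u)) else 0)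
      = (if k ≤ i then Real.exp (θ (psi p (e i)))
          / ∑ u ∈ Finset.univ.filter (fun u => k ≤ u), Real.exp (θ (psi p (e u))) else 0) := by
    intro k
    simp only [Fin.succ_le_succ_iff, denom_succ θ p e k]
  rw [Finset.sum_congr rfl (fun k _ => this k), ← Finset.sum_filter]
  ring

end Aux


lemma exp_sum_pos (n : ℕ) (θ : Fin (n+1) → ℝ) : 0 < ∑ t, Real.exp (θ t) :=
  Finset.sum_pos (fun t _ => Real.exp_pos _) ⟨0, Finset.mem_univ _⟩

lemma q_sum_one (n : ℕ) (θ : Fin (n+1) → ℝ) :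
    ∑ p : Fin (n+1), Real.exp (θ p) / ∑ t, Real.exp (θ t) = 1 := by
  rw [← Finset.sum_div, div_self (exp_sum_pos n θ).ne']

lemma pl_nonneg {n : ℕ} (θ : Fin n → ℝ) (π : Equiv.Perm (Fin n)) :
    0 ≤ plackettLuce θ π := by
  refine Finset.prod_nonneg fun k _ => div_nonneg (Real.exp_pos _).le ?_
  exact Finset.sum_nonneg fun u _ => (Real.exp_pos _).le

lemma pl_sum : ∀ (n : ℕ) (θ : Fin n → ℝ), ∑ π : Equiv.Perm (Fin n), plackettLuce θ π = 1 := by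
  intro n
  induction n with
  | zero => intro θ; simp [plackettLuce]
  | succ n ih =>
    intro θ
    rw [← Equiv.sum_comp (Equiv.Perm.decomposeFin.symm)
      (fun π => plackettLuce θ π), Fintype.sum_prod_type]
    calc ∑ p : Fin (n+1), ∑ e : Equiv.Perm (Fin n),
          plackettLuce θ (Equiv.Perm.decomposeFin.symm (p, e))
        = ∑ p : Fin (n+1), Real.exp (θ p) / ∑ t, Real.exp (θ t) := by
          refine Finset.sum_congr rfl fun p _ => ?_
          simp only [pl_decomp]
          rw [← Finset.mul_sum, ih, mul_one]
      _ = 1 := q_sum_one n θ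

lemma pl_mean_zero : ∀ (n : ℕ) (θ v : Fin n → ℝ),
    ∑ π : Equiv.Perm (Fin n),
      plackettLuce θ π * ∑ i, v (π i) * plScore θ π i = 0 := by
  intro n
  induction n with
  | zero => intro θ v; simp
  | succ n ih =>
    intro θ v
    rw [← Equiv.sum_comp (Equiv.Perm.decomposeFin.symm)
      (fun π => plackettLuce θ π * ∑ i, v (π i) * plScore θ π i), Fintype.sum_prod_type]
    set S := ∑ t, Real.exp (θ t) with hS
    set q : Fin (n+1) → ℝ := fun t => Real.exp (θ t) / S with hq
    have key : ∀ p : Fin (n+1),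
        (∑ e : Equiv.Perm (Fin n),
          plackettLuce θ (Equiv.Perm.decomposeFin.symm (p, e))
            * ∑ i, v (Equiv.Perm.decomposeFin.symm (p, e) i)
                * plScore θ (Equiv.Perm.decomposeFin.symm (p, e)) i)
        = q p * (v p - ∑ t, v t * q t) := by
      intro p
      set θ' : Fin n → ℝ := fun j => θ (psi p j) with hθ'
      have hsum : ∀ e : Equiv.Perm (Fin n),
          (∑ i, v (Equiv.Perm.decomposeFin.symm (p, e) i)
              * plScore θ (Equiv.Perm.decomposeFin.symm (p, e)) i)
          = v p * (1 - q p)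
            + ((∑ i, (fun j => v (psi p j)) (e i) * plScore θ' e i)
                - ∑ i, v (psi p (e i)) * (Real.exp (θ' (e i)) / S)) := by
        intro e
        rw [Fin.sum_univ_succ, Equiv.Perm.decomposeFin_symm_apply_zero, plScore_zero]
        have : ∀ i : Fin n,
            v (Equiv.Perm.decomposeFin.symm (p, e) i.succ)
              * plScore θ (Equiv.Perm.decomposeFin.symm (p, e)) i.succ
            = v (psi p (e i)) * plScore θ' e i
              - v (psi p (e i)) * (Real.exp (θ' (e i)) / S) := by
          intro i
          have hπ : Equiv.Perm.decomposeFin.symm (p, e) i.succ = psi p (e i) := by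
            rw [Equiv.Perm.decomposeFin_symm_apply_succ]; rfl
          simp only [hπ, plScore_succ, hθ', hS]
          ring
        rw [Finset.sum_congr rfl (fun i _ => this i), Finset.sum_sub_distrib]
      have hfix : ∀ e : Equiv.Perm (Fin n),
          ∑ i, v (psi p (e i)) * (Real.exp (θ' (e i)) / S)
            = ∑ j, v (psi p j) * (Real.exp (θ' j) / S) :=
        fun e => Equiv.sum_comp e (fun j => v (psi p j) * (Real.exp (θ' j) / S))
      calc (∑ e : Equiv.Perm (Fin n),
          plackettLuce θ (Equiv.Perm.decomposeFin.symm (p, e))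
            * ∑ i, v (Equiv.Perm.decomposeFin.symm (p, e) i)
                * plScore θ (Equiv.Perm.decomposeFin.symm (p, e)) i)
          = ∑ e : Equiv.Perm (Fin n), (q p * plackettLuce θ' e)
              * (v p * (1 - q p)
                + ((∑ i, (fun j => v (psi p j)) (e i) * plScore θ' e i)
                    - ∑ j, v (psi p j) * (Real.exp (θ' j) / S))) := by
            refine Finset.sum_congr rfl fun e _ => ?_
            rw [pl_decomp, hsum e, hfix e]
        _ = ∑ e : Equiv.Perm (Fin n),
              q p * ((v p * (1 - q p) - ∑ j, v (psi p j) * (Real.exp (θ' j) / S))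
                  * plackettLuce θ' e
                + plackettLuce θ' e
                  * ∑ i, (fun j => v (psi p j)) (e i) * plScore θ' e i) := by
            refine Finset.sum_congr rfl fun e _ => ?_
            ring
        _ = q p * ((v p * (1 - q p) - ∑ j, v (psi p j) * (Real.exp (θ' j) / S))
              * (∑ e : Equiv.Perm (Fin n), plackettLuce θ' e)
              + ∑ e : Equiv.Perm (Fin n), plackettLuce θ' e
                  * ∑ i, (fun j => v (psi p j)) (e i) * plScore θ' e i) := by
            rw [← Finset.mul_sum, Finset.sum_add_distrib, ← Finset.mul_sum]
        _ = q p * (v p - ∑ t, v t * q t) := by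
            rw [pl_sum, ih θ' (fun j => v (psi p j))]
            have : v p * q p + ∑ j, v (psi p j) * (Real.exp (θ' j) / S)
                = ∑ t, v t * q t := cover_lemma p (fun t => v t * q t)
            have h2 : ∑ j, v (psi p j) * (Real.exp (θ' j) / S)
                = (∑ t, v t * q t) - v p * q p := by linarith
            rw [h2]; ring
    rw [Finset.sum_congr rfl (fun p _ => key p)]
    have hq1 : ∑ t : Fin (n+1), q t = 1 := by simp only [hq]; exact q_sum_one n θ
    calc ∑ p : Fin (n+1), q p * (v p - ∑ t, v t * q t)
        = (∑ p : Fin (n+1), v p * q p) - (∑ p : Fin (n+1), q p) * (∑ t, v t * q t) := by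
          rw [Finset.sum_mul, ← Finset.sum_sub_distrib]
          refine Finset.sum_congr rfl fun p _ => ?_
          ring
      _ = 0 := by rw [hq1]; ring

lemma pl_sq : ∀ (n : ℕ) (θ : Fin n → ℝ),
    ∑ π : Equiv.Perm (Fin n), plackettLuce θ π * ∑ i, (plScore θ π i)^2 ≤ (n : ℝ) := by
  intro n
  induction n with
  | zero => intro θ; simp
  | succ n ih =>
    intro θ
    rw [← Equiv.sum_comp (Equiv.Perm.decomposeFin.symm)
      (fun π => plackettLuce θ π * ∑ i, (plScore θ π i)^2), Fintype.sum_prod_type]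
    set S := ∑ t, Real.exp (θ t) with hS
    set q : Fin (n+1) → ℝ := fun t => Real.exp (θ t) / S with hq
    have hq0 : ∀ t, 0 ≤ q t := fun t =>
      div_nonneg (Real.exp_pos _).le (exp_sum_pos n θ).le
    have hq1 : ∑ t : Fin (n+1), q t = 1 := by simp only [hq]; exact q_sum_one n θ
    have key : ∀ p : Fin (n+1),
        (∑ e : Equiv.Perm (Fin n),
          plackettLuce θ (Equiv.Perm.decomposeFin.symm (p, e))
            * ∑ i, (plScore θ (Equiv.Perm.decomposeFin.symm (p, e)) i)^2)
        ≤ q p * ((1 - q p)^2 + ((∑ t, (q t)^2) - (q p)^2) + n) := by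
      intro p
      set θ' : Fin n → ℝ := fun j => θ (psi p j) with hθ'
      set r : Fin n → ℝ := fun j => Real.exp (θ' j) / S with hr
      have hsum : ∀ e : Equiv.Perm (Fin n),
          (∑ i, (plScore θ (Equiv.Perm.decomposeFin.symm (p, e)) i)^2)
          = (1 - q p)^2 + ((∑ i, (plScore θ' e i)^2)
              - 2 * (∑ i, r (e i) * plScore θ' e i) + ∑ i, (r (e i))^2) := by
        intro e
        rw [Fin.sum_univ_succ, plScore_zero]
        have h1 : ∀ i : Fin n,
            (plScore θ (Equiv.Perm.decomposeFin.symm (p, e)) i.succ)^2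
            = (plScore θ' e i)^2 - 2 * (r (e i) * plScore θ' e i) + (r (e i))^2 := by
          intro i
          simp only [plScore_succ, hθ', hr, hS]
          ring
        rw [Finset.sum_congr rfl (fun i _ => h1 i), Finset.sum_add_distrib,
          Finset.sum_sub_distrib, ← Finset.mul_sum]
      have hfix : ∀ e : Equiv.Perm (Fin n),
          ∑ i, (r (e i))^2 = ∑ j, (r j)^2 :=
        fun e => Equiv.sum_comp e (fun j => (r j)^2)
      have hD : ∑ j, (r j)^2 = (∑ t, (q t)^2) - (q p)^2 := by
        have hc := cover_lemma p (fun t => (q t)^2)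
        have : ∀ j, (r j)^2 = (q (psi p j))^2 := fun j => rfl
        rw [Finset.sum_congr rfl (fun j _ => this j)]
        linarith
      calc (∑ e : Equiv.Perm (Fin n),
          plackettLuce θ (Equiv.Perm.decomposeFin.symm (p, e))
            * ∑ i, (plScore θ (Equiv.Perm.decomposeFin.symm (p, e)) i)^2)
          = ∑ e : Equiv.Perm (Fin n), (q p * plackettLuce θ' e)
              * ((1 - q p)^2 + ((∑ i, (plScore θ' e i)^2)
                  - 2 * (∑ i, r (e i) * plScore θ' e i) + ∑ j, (r j)^2)) := by
            refine Finset.sum_congr rfl fun e _ => ?_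
            rw [pl_decomp, hsum e, hfix e]
        _ = ∑ e : Equiv.Perm (Fin n),
              (q p * (((1 - q p)^2 + ∑ j, (r j)^2) * plackettLuce θ' e
                + plackettLuce θ' e * (∑ i, (plScore θ' e i)^2)
                - 2 * (plackettLuce θ' e * ∑ i, r (e i) * plScore θ' e i))) := by
            refine Finset.sum_congr rfl fun e _ => ?_
            ring
        _ = q p * ((((1 - q p)^2 + ∑ j, (r j)^2)
                * ∑ e : Equiv.Perm (Fin n), plackettLuce θ' e)
              + (∑ e : Equiv.Perm (Fin n),
                  plackettLuce θ' e * (∑ i, (plScore θ' e i)^2))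
              - 2 * (∑ e : Equiv.Perm (Fin n),
                  plackettLuce θ' e * ∑ i, r (e i) * plScore θ' e i)) := by
            rw [← Finset.mul_sum, Finset.sum_sub_distrib, Finset.sum_add_distrib,
              ← Finset.mul_sum, ← Finset.mul_sum]
        _ = q p * (((1 - q p)^2 + ∑ j, (r j)^2)
              + (∑ e : Equiv.Perm (Fin n),
                  plackettLuce θ' e * (∑ i, (plScore θ' e i)^2))) := by
            rw [pl_sum, pl_mean_zero n θ' r, mul_one, mul_zero, sub_zero]
        _ ≤ q p * (((1 - q p)^2 + ∑ j, (r j)^2) + n) := by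
            refine mul_le_mul_of_nonneg_left ?_ (hq0 p)
            exact add_le_add_right (ih θ') _
        _ = q p * ((1 - q p)^2 + ((∑ t, (q t)^2) - (q p)^2) + n) := by
            rw [hD]
    calc (∑ p : Fin (n+1), ∑ e : Equiv.Perm (Fin n),
          plackettLuce θ (Equiv.Perm.decomposeFin.symm (p, e))
            * ∑ i, (plScore θ (Equiv.Perm.decomposeFin.symm (p, e)) i)^2)
        ≤ ∑ p : Fin (n+1), q p * ((1 - q p)^2 + ((∑ t, (q t)^2) - (q p)^2) + n) :=
          Finset.sum_le_sum fun p _ => key p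
      _ = ∑ p : Fin (n+1), (q p * (1 + (∑ t, (q t)^2) + n) - 2 * (q p)^2) := by
          refine Finset.sum_congr rfl fun p _ => ?_
          ring
      _ = (∑ p : Fin (n+1), q p) * (1 + (∑ t, (q t)^2) + n)
            - 2 * ∑ p : Fin (n+1), (q p)^2 := by
          rw [Finset.sum_sub_distrib, ← Finset.sum_mul, ← Finset.mul_sum]
      _ ≤ ((n+1 : ℕ) : ℝ) := by
          rw [hq1]
          have h0 : (0:ℝ) ≤ ∑ t : Fin (n+1), (q t)^2 :=
            Finset.sum_nonneg fun t _ => sq_nonneg _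
          push_cast
          linarith

lemma sum_fun_prod {ι κ : Type*} [Fintype ι] [DecidableEq ι] [Fintype κ]
    (g : ι → κ → ℝ) :
    ∑ b : ι → κ, ∏ i, g i (b i) = ∏ i, ∑ x : κ, g i x := by
  rw [Finset.prod_univ_sum, Fintype.piFinset_univ]

set_option maxHeartbeats 1000000 in
lemma bern_factor {n : ℕ} (g : Fin n → Fin n → Bool → ℝ) :
    ∑ b : Fin n → Fin n → Bool, ∏ i, ∏ j, g i j (b i j)
      = ∏ i, ∏ j, (g i j true + g i j false) := by
  calc ∑ b : Fin n → Fin n → Bool,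
        ∏ i, (fun c : Fin n → Bool => ∏ j, g i j (c j)) (b i)
      = ∏ i, ∑ c : Fin n → Bool, ∏ j, g i j (c j) := sum_fun_prod (fun i (c : Fin n → Bool) => ∏ j, g i j (c j))
    _ = ∏ i, ∏ j, (g i j true + g i j false) := by
        refine Finset.prod_congr rfl fun i _ => ?_
        rw [sum_fun_prod]
        refine Finset.prod_congr rfl fun j _ => ?_
        simp [Fintype.sum_bool]

set_option maxHeartbeats 1000000 in
lemma bern_sum {n : ℕ} (p : Fin n → Fin n → ℝ) :
    ∑ b : Fin n → Fin n → Bool,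
      ∏ i, ∏ j, (if b i j then p i j else 1 - p i j) = 1 := by
  have h := bern_factor (fun i j x => if x then p i j else 1 - p i j)
  beta_reduce at h
  rw [h]
  refine Finset.prod_eq_one fun i _ => Finset.prod_eq_one fun j _ => ?_
  simp

set_option maxHeartbeats 1000000 in
lemma bern_sq {n : ℕ} (p : Fin n → Fin n → ℝ) (i0 j0 : Fin n) :
    ∑ b : Fin n → Fin n → Bool,
      (∏ i, ∏ j, (if b i j then p i j else 1 - p i j))
        * ((if b i0 j0 then (1:ℝ) else 0) - p i0 j0)^2
      = p i0 j0 * (1 - p i0 j0) := by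
  have hterm : ∀ b : Fin n → Fin n → Bool,
      (∏ i, ∏ j, (if b i j then p i j else 1 - p i j))
        * ((if b i0 j0 then (1:ℝ) else 0) - p i0 j0)^2
      = ∏ i, ∏ j, ((fun (i : Fin n) (j : Fin n) (x : Bool) =>
          (if x then p i j else 1 - p i j)
          * (if i = i0 ∧ j = j0 then ((if x then (1:ℝ) else 0) - p i j)^2 else 1)) i j (b i j)) := by
    intro b
    have hB : (∏ i, ∏ j, (if i = i0 ∧ j = j0
          then ((if b i j then (1:ℝ) else 0) - p i j)^2 else 1))
        = ((if b i0 j0 then (1:ℝ) else 0) - p i0 j0)^2 := by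
      rw [Finset.prod_eq_single i0
        (fun x _ hx => Finset.prod_eq_one (fun j _ => by simp [hx]))
        (fun h => absurd (Finset.mem_univ i0) h)]
      rw [Finset.prod_eq_single j0 (fun x _ hx => by simp [hx])
        (fun h => absurd (Finset.mem_univ j0) h)]
      simp
    simp only [Finset.prod_mul_distrib]
    rw [hB]
  rw [Finset.sum_congr rfl (fun b _ => hterm b),
    bern_factor (fun (i : Fin n) (j : Fin n) (x : Bool) =>
      (if x then p i j else 1 - p i j)
      * (if i = i0 ∧ j = j0 then ((if x then (1:ℝ) else 0) - p i j)^2 else 1))]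
  rw [Finset.prod_eq_single i0
    (fun x _ hx => Finset.prod_eq_one (fun j _ => by simp [hx]))
    (fun h => absurd (Finset.mem_univ i0) h)]
  rw [Finset.prod_eq_single j0 (fun x _ hx => by simp [hx])
    (fun h => absurd (Finset.mem_univ j0) h)]
  simp
  ring

/-- Variance bound for the REINFORCE estimator
`g(M') = (f(M') − m) · G(M')` under the Bernoulli-Plackett-Luce model: if the
squared centered reward is uniformly bounded by `V`, then
`Var(g) ≤ E[‖g‖₂²] ≤ V · (n + Σ_{i,j} p_{ij}(1 − p_{ij}))`, where `Var(g)`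
denotes the trace of the covariance of `g`, i.e. `E[‖g‖₂²] − ‖E[g]‖₂²`. -/
theorem bpl_reinforce_variance_bound {n : ℕ} (hn : 1 ≤ n)
    (θ : Fin n → ℝ) (p : Fin n → Fin n → ℝ) (hp : ∀ i j, 0 ≤ p i j ∧ p i j ≤ 1)
    (f : Equiv.Perm (Fin n) × (Fin n → Fin n → Bool) → ℝ) (m V : ℝ)
    (hV : ∀ ω : Equiv.Perm (Fin n) × (Fin n → Fin n → Bool), (f ω - m) ^ 2 ≤ V) :
    ((∑ ω : Equiv.Perm (Fin n) × (Fin n → Fin n → Bool),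
          bplProb θ p ω * ∑ t : Fin n ⊕ Fin n × Fin n, ((f ω - m) * bplScore θ p ω t) ^ 2)
        - ∑ t : Fin n ⊕ Fin n × Fin n,
            (∑ ω : Equiv.Perm (Fin n) × (Fin n → Fin n → Bool),
              bplProb θ p ω * ((f ω - m) * bplScore θ p ω t)) ^ 2)
      ≤ (∑ ω : Equiv.Perm (Fin n) × (Fin n → Fin n → Bool),
          bplProb θ p ω * ∑ t : Fin n ⊕ Fin n × Fin n, ((f ω - m) * bplScore θ p ω t) ^ 2)
    ∧ (∑ ω : Equiv.Perm (Fin n) × (Fin n → Fin n → Bool),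
          bplProb θ p ω * ∑ t : Fin n ⊕ Fin n × Fin n, ((f ω - m) * bplScore θ p ω t) ^ 2)
        ≤ V * ((n : ℝ) + ∑ i : Fin n, ∑ j : Fin n, p i j * (1 - p i j)) := by
  
  constructor
  · exact sub_le_self _ (Finset.sum_nonneg fun t _ => sq_nonneg _)
  · have hV0 : 0 ≤ V := le_trans (sq_nonneg _) (hV (1, fun _ _ => true))
    have hPnn : ∀ ω : Equiv.Perm (Fin n) × (Fin n → Fin n → Bool), 0 ≤ bplProb θ p ω := by
      intro ω
      refine mul_nonneg (pl_nonneg θ ω.1)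
        (Finset.prod_nonneg fun i _ => Finset.prod_nonneg fun j _ => ?_)
      split_ifs
      · exact (hp i j).1
      · linarith [(hp i j).2]
    have hQnn : ∀ ω : Equiv.Perm (Fin n) × (Fin n → Fin n → Bool),
        (0:ℝ) ≤ ∑ t : Fin n ⊕ Fin n × Fin n, (bplScore θ p ω t)^2 :=
      fun ω => Finset.sum_nonneg fun t _ => sq_nonneg _
    have key : (∑ ω : Equiv.Perm (Fin n) × (Fin n → Fin n → Bool),
        bplProb θ p ω * ∑ t : Fin n ⊕ Fin n × Fin n, (bplScore θ p ω t)^2)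
        ≤ (n : ℝ) + ∑ i : Fin n, ∑ j : Fin n, p i j * (1 - p i j) := by
      have hsplitQ : ∀ ω : Equiv.Perm (Fin n) × (Fin n → Fin n → Bool),
          (∑ t : Fin n ⊕ Fin n × Fin n, (bplScore θ p ω t)^2)
          = (∑ i, (plScore θ ω.1 i)^2)
            + ∑ i, ∑ j, ((if ω.2 i j then (1:ℝ) else 0) - p i j)^2 := by
        intro ω
        rw [Fintype.sum_sum_type]
        simp only [bplScore, Sum.elim_inl, Sum.elim_inr, Fintype.sum_prod_type]
      have hBC : ∑ b : Fin n → Fin n → Bool,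
          (∏ i, ∏ j, (if b i j then p i j else 1 - p i j))
            * (∑ i, ∑ j, ((if b i j then (1:ℝ) else 0) - p i j)^2)
          = ∑ i, ∑ j, p i j * (1 - p i j) := by
        calc ∑ b : Fin n → Fin n → Bool,
            (∏ i, ∏ j, (if b i j then p i j else 1 - p i j))
              * (∑ i, ∑ j, ((if b i j then (1:ℝ) else 0) - p i j)^2)
            = ∑ b : Fin n → Fin n → Bool, ∑ i, ∑ j,
                (∏ i', ∏ j', (if b i' j' then p i' j' else 1 - p i' j'))
                  * ((if b i j then (1:ℝ) else 0) - p i j)^2 := by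
              refine Finset.sum_congr rfl fun b _ => ?_
              rw [Finset.mul_sum]
              exact Finset.sum_congr rfl fun i _ => Finset.mul_sum _ _ _
          _ = ∑ i, ∑ b : Fin n → Fin n → Bool, ∑ j,
                (∏ i', ∏ j', (if b i' j' then p i' j' else 1 - p i' j'))
                  * ((if b i j then (1:ℝ) else 0) - p i j)^2 := Finset.sum_comm
          _ = ∑ i, ∑ j, ∑ b : Fin n → Fin n → Bool,
                (∏ i', ∏ j', (if b i' j' then p i' j' else 1 - p i' j'))
                  * ((if b i j then (1:ℝ) else 0) - p i j)^2 :=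
              Finset.sum_congr rfl fun i _ => Finset.sum_comm
          _ = ∑ i, ∑ j, p i j * (1 - p i j) :=
              Finset.sum_congr rfl fun i _ =>
                Finset.sum_congr rfl fun j _ => bern_sq p i j
      calc (∑ ω : Equiv.Perm (Fin n) × (Fin n → Fin n → Bool),
            bplProb θ p ω * ∑ t : Fin n ⊕ Fin n × Fin n, (bplScore θ p ω t)^2)
          = ∑ π : Equiv.Perm (Fin n), ∑ b : Fin n → Fin n → Bool,
              (plackettLuce θ π * ∏ i, ∏ j, (if b i j then p i j else 1 - p i j))
                * ((∑ i, (plScore θ π i)^2)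
                  + ∑ i, ∑ j, ((if b i j then (1:ℝ) else 0) - p i j)^2) := by
            rw [Fintype.sum_prod_type]
            exact Finset.sum_congr rfl fun π _ => Finset.sum_congr rfl fun b _ => by
              rw [hsplitQ (π, b)]; rfl
        _ = ∑ π : Equiv.Perm (Fin n),
              (plackettLuce θ π * (∑ i, (plScore θ π i)^2)
                + plackettLuce θ π * (∑ i, ∑ j, p i j * (1 - p i j))) := by
            refine Finset.sum_congr rfl fun π _ => ?_
            calc ∑ b : Fin n → Fin n → Bool,
                (plackettLuce θ π * ∏ i, ∏ j, (if b i j then p i j else 1 - p i j))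
                  * ((∑ i, (plScore θ π i)^2)
                    + ∑ i, ∑ j, ((if b i j then (1:ℝ) else 0) - p i j)^2)
                = ∑ b : Fin n → Fin n → Bool,
                  (plackettLuce θ π * (∑ i, (plScore θ π i)^2)
                      * ∏ i, ∏ j, (if b i j then p i j else 1 - p i j)
                    + plackettLuce θ π
                      * ((∏ i, ∏ j, (if b i j then p i j else 1 - p i j))
                        * ∑ i, ∑ j, ((if b i j then (1:ℝ) else 0) - p i j)^2)) := by
                  refine Finset.sum_congr rfl fun b _ => ?_
                  ring
              _ = plackettLuce θ π * (∑ i, (plScore θ π i)^2)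
                    * (∑ b : Fin n → Fin n → Bool,
                        ∏ i, ∏ j, (if b i j then p i j else 1 - p i j))
                  + plackettLuce θ π
                    * ∑ b : Fin n → Fin n → Bool,
                        ((∏ i, ∏ j, (if b i j then p i j else 1 - p i j))
                          * ∑ i, ∑ j, ((if b i j then (1:ℝ) else 0) - p i j)^2) := by
                  rw [Finset.sum_add_distrib, ← Finset.mul_sum, ← Finset.mul_sum]
              _ = plackettLuce θ π * (∑ i, (plScore θ π i)^2)
                  + plackettLuce θ π * (∑ i, ∑ j, p i j * (1 - p i j)) := by
                  rw [bern_sum p, hBC, mul_one]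
        _ = (∑ π : Equiv.Perm (Fin n), plackettLuce θ π * ∑ i, (plScore θ π i)^2)
              + (∑ π : Equiv.Perm (Fin n), plackettLuce θ π)
                * (∑ i, ∑ j, p i j * (1 - p i j)) := by
            rw [Finset.sum_add_distrib, ← Finset.sum_mul]
        _ ≤ (n : ℝ) + ∑ i, ∑ j, p i j * (1 - p i j) := by
            rw [pl_sum n θ, one_mul]
            exact add_le_add_left (pl_sq n θ) _
    calc (∑ ω : Equiv.Perm (Fin n) × (Fin n → Fin n → Bool),
          bplProb θ p ω * ∑ t : Fin n ⊕ Fin n × Fin n, ((f ω - m) * bplScore θ p ω t)^2)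
        = ∑ ω : Equiv.Perm (Fin n) × (Fin n → Fin n → Bool),
            bplProb θ p ω * ((f ω - m)^2
              * ∑ t : Fin n ⊕ Fin n × Fin n, (bplScore θ p ω t)^2) := by
          refine Finset.sum_congr rfl fun ω _ => ?_
          congr 1
          rw [Finset.mul_sum]
          exact Finset.sum_congr rfl fun t _ => by ring
      _ ≤ ∑ ω : Equiv.Perm (Fin n) × (Fin n → Fin n → Bool),
            bplProb θ p ω * (V * ∑ t : Fin n ⊕ Fin n × Fin n, (bplScore θ p ω t)^2) := by
          refine Finset.sum_le_sum fun ω _ => ?_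
          exact mul_le_mul_of_nonneg_left
            (mul_le_mul_of_nonneg_right (hV ω) (hQnn ω)) (hPnn ω)
      _ = V * ∑ ω : Equiv.Perm (Fin n) × (Fin n → Fin n → Bool),
            bplProb θ p ω * ∑ t : Fin n ⊕ Fin n × Fin n, (bplScore θ p ω t)^2 := by
          rw [Finset.mul_sum]
          exact Finset.sum_congr rfl fun ω _ => by ring
      _ ≤ V * ((n:ℝ) + ∑ i : Fin n, ∑ j : Fin n, p i j * (1 - p i j)) :=
          mul_le_mul_of_nonneg_left key hV0
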